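/- arXiv:1903.01065 — 3 statements merged into one kernel-verified Lean document; each statement's English description precedes it below -/
import Mathlib

section
/- Let D be the dual function of the voltage control problem with linearized power flow v(p,q) = Rp + Xq + v₀𝟏. Then ∇D is Lipschitz continuous with constant L = 2(‖R‖² + ‖X‖²)/a_min, where ‖·‖ is the spectral norm and a_min is the smallest of the quadratic cost coefficients. -/
private lemma min_lip (a b c : ℝ) : |min a c - min b c| ≤ |a - b| := by
  have h1 := le_abs_self (a - b)
  have h2 := neg_abs_le (a - b)
  rw [min_def, min_def]
  split_ifs <;> rw [abs_sub_le_iff] <;> constructor <;> linarith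

private lemma clamp_lip (lo hi x y : ℝ) :
    |max lo (min x hi) - max lo (min y hi)| ≤ |x - y| := by
  calc |max lo (min x hi) - max lo (min y hi)|
      = |max (min x hi) lo - max (min y hi) lo| := by rw [max_comm lo, max_comm lo]
    _ ≤ |min x hi - min y hi| := abs_max_sub_max_le_abs _ _ _
    _ ≤ |x - y| := min_lip x y hi

private lemma euc_norm_le {N : ℕ} (x y : EuclideanSpace ℝ (Fin N))
    (h : ∀ i, |x i| ≤ |y i|) : ‖x‖ ≤ ‖y‖ := by
  rw [EuclideanSpace.norm_eq, EuclideanSpace.norm_eq]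
  apply Real.sqrt_le_sqrt
  apply Finset.sum_le_sum
  intro i _
  have := h i
  simp only [Real.norm_eq_abs]
  nlinarith [abs_nonneg (x i), abs_nonneg (y i)]

private lemma add_le_sqrt_two (a b : ℝ) (ha : 0 ≤ a) (hb : 0 ≤ b) :
    a + b ≤ Real.sqrt 2 * Real.sqrt (a ^ 2 + b ^ 2) := by
  have h : (a + b) ^ 2 ≤ 2 * (a ^ 2 + b ^ 2) := by nlinarith [sq_nonneg (a - b)]
  calc a + b = Real.sqrt ((a + b) ^ 2) := (Real.sqrt_sq (by positivity)).symm
    _ ≤ Real.sqrt (2 * (a ^ 2 + b ^ 2)) := Real.sqrt_le_sqrt h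
    _ = Real.sqrt 2 * Real.sqrt (a ^ 2 + b ^ 2) := Real.sqrt_mul (by norm_num) _

/-- The dual gradient of the voltage control problem with linearized power flow
is Lipschitz continuous with constant `L = 2(‖R‖² + ‖X‖²)/a_min`. -/
theorem stmt_3 (N : ℕ)
    (R X : EuclideanSpace ℝ (Fin N) →L[ℝ] EuclideanSpace ℝ (Fin N))
    (aP aQ bP bQ pl pu ql qu vl vu : Fin N → ℝ) (v0 amin : ℝ)
    (hamin : 0 < amin) (haP : ∀ i, amin ≤ aP i) (haQ : ∀ i, amin ≤ aQ i)
    (hbox_p : ∀ i, pl i ≤ pu i) (hbox_q : ∀ i, ql i ≤ qu i)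
    (p q : EuclideanSpace ℝ (Fin N) → EuclideanSpace ℝ (Fin N) → EuclideanSpace ℝ (Fin N))
    (hp : ∀ ll lb i, p ll lb i = max (pl i) (min ((R (ll - lb)) i / aP i - bP i) (pu i)))
    (hq : ∀ ll lb i, q ll lb i = max (ql i) (min ((X (ll - lb)) i / aQ i - bQ i) (qu i)))
    (v : EuclideanSpace ℝ (Fin N) → EuclideanSpace ℝ (Fin N) → EuclideanSpace ℝ (Fin N))
    (hv : ∀ pp qq i, v pp qq i = (R pp) i + (X qq) i + v0)
    (gD1 gD2 : EuclideanSpace ℝ (Fin N) → EuclideanSpace ℝ (Fin N) → EuclideanSpace ℝ (Fin N))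
    (hg1 : ∀ ll lb i, gD1 ll lb i = vl i - v (p ll lb) (q ll lb) i)
    (hg2 : ∀ ll lb i, gD2 ll lb i = v (p ll lb) (q ll lb) i - vu i) :
    ∀ ll₁ lb₁ ll₂ lb₂ : EuclideanSpace ℝ (Fin N),
      (∀ i, 0 ≤ ll₁ i) → (∀ i, 0 ≤ lb₁ i) → (∀ i, 0 ≤ ll₂ i) → (∀ i, 0 ≤ lb₂ i) →
      Real.sqrt (‖gD1 ll₁ lb₁ - gD1 ll₂ lb₂‖ ^ 2 + ‖gD2 ll₁ lb₁ - gD2 ll₂ lb₂‖ ^ 2) ≤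
        (2 * (‖R‖ ^ 2 + ‖X‖ ^ 2) / amin) *
          Real.sqrt (‖ll₁ - ll₂‖ ^ 2 + ‖lb₁ - lb₂‖ ^ 2) := by
  intro ll₁ lb₁ ll₂ lb₂ _ _ _ _
  set Δ : EuclideanSpace ℝ (Fin N) := (ll₁ - lb₁) - (ll₂ - lb₂) with hΔdef
  -- pointwise Lipschitz bound for p
  have hpw : ∀ i, |(p ll₁ lb₁ - p ll₂ lb₂) i| ≤ |(amin⁻¹ • R Δ) i| := by
    intro i
    have h1 : (p ll₁ lb₁ - p ll₂ lb₂) i = p ll₁ lb₁ i - p ll₂ lb₂ i := rfl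
    rw [h1, hp, hp]
    have hlip := clamp_lip (pl i) (pu i)
      ((R (ll₁ - lb₁)) i / aP i - bP i) ((R (ll₂ - lb₂)) i / aP i - bP i)
    have ha : (0:ℝ) < aP i := lt_of_lt_of_le hamin (haP i)
    have hdiff : (R (ll₁ - lb₁)) i / aP i - bP i - ((R (ll₂ - lb₂)) i / aP i - bP i)
        = (R Δ) i / aP i := by
      have key : (R Δ) i = (R (ll₁ - lb₁)) i - (R (ll₂ - lb₂)) i := by
        rw [hΔdef, map_sub]; rfl
      rw [key]; ring
    rw [hdiff] at hlip
    refine hlip.trans ?_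
    have h2 : (amin⁻¹ • R Δ) i = amin⁻¹ * (R Δ) i := rfl
    rw [h2, abs_div, abs_mul, abs_of_pos ha, abs_of_pos (inv_pos.mpr hamin),
      div_eq_inv_mul]
    exact mul_le_mul_of_nonneg_right
      (inv_anti₀ hamin (haP i)) (abs_nonneg _)
  have hqw : ∀ i, |(q ll₁ lb₁ - q ll₂ lb₂) i| ≤ |(amin⁻¹ • X Δ) i| := by
    intro i
    have h1 : (q ll₁ lb₁ - q ll₂ lb₂) i = q ll₁ lb₁ i - q ll₂ lb₂ i := rfl
    rw [h1, hq, hq]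
    have hlip := clamp_lip (ql i) (qu i)
      ((X (ll₁ - lb₁)) i / aQ i - bQ i) ((X (ll₂ - lb₂)) i / aQ i - bQ i)
    have ha : (0:ℝ) < aQ i := lt_of_lt_of_le hamin (haQ i)
    have hdiff : (X (ll₁ - lb₁)) i / aQ i - bQ i - ((X (ll₂ - lb₂)) i / aQ i - bQ i)
        = (X Δ) i / aQ i := by
      have key : (X Δ) i = (X (ll₁ - lb₁)) i - (X (ll₂ - lb₂)) i := by
        rw [hΔdef, map_sub]; rfl
      rw [key]; ring
    rw [hdiff] at hlip
    refine hlip.trans ?_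
    have h2 : (amin⁻¹ • X Δ) i = amin⁻¹ * (X Δ) i := rfl
    rw [h2, abs_div, abs_mul, abs_of_pos ha, abs_of_pos (inv_pos.mpr hamin),
      div_eq_inv_mul]
    exact mul_le_mul_of_nonneg_right
      (inv_anti₀ hamin (haQ i)) (abs_nonneg _)
  have hnp : ‖p ll₁ lb₁ - p ll₂ lb₂‖ ≤ amin⁻¹ * (‖R‖ * ‖Δ‖) := by
    refine (euc_norm_le _ _ hpw).trans ?_
    rw [norm_smul, Real.norm_eq_abs, abs_of_pos (inv_pos.mpr hamin)]
    exact mul_le_mul_of_nonneg_left (R.le_opNorm Δ) (le_of_lt (inv_pos.mpr hamin))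
  have hnq : ‖q ll₁ lb₁ - q ll₂ lb₂‖ ≤ amin⁻¹ * (‖X‖ * ‖Δ‖) := by
    refine (euc_norm_le _ _ hqw).trans ?_
    rw [norm_smul, Real.norm_eq_abs, abs_of_pos (inv_pos.mpr hamin)]
    exact mul_le_mul_of_nonneg_left (X.le_opNorm Δ) (le_of_lt (inv_pos.mpr hamin))
  set w : EuclideanSpace ℝ (Fin N) :=
    R (p ll₁ lb₁ - p ll₂ lb₂) + X (q ll₁ lb₁ - q ll₂ lb₂) with hwdef
  have hg1w : gD1 ll₁ lb₁ - gD1 ll₂ lb₂ = -w := by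
    ext i
    have h1 : (gD1 ll₁ lb₁ - gD1 ll₂ lb₂) i = gD1 ll₁ lb₁ i - gD1 ll₂ lb₂ i := rfl
    have h2 : (-w) i = -(w i) := rfl
    have h3 : w i = (R (p ll₁ lb₁ - p ll₂ lb₂)) i + (X (q ll₁ lb₁ - q ll₂ lb₂)) i := rfl
    rw [h1, h2, h3, hg1, hg1, hv, hv, map_sub, map_sub]
    have h4 : (R (p ll₁ lb₁) - R (p ll₂ lb₂)) i = (R (p ll₁ lb₁)) i - (R (p ll₂ lb₂)) i := rfl
    have h5 : (X (q ll₁ lb₁) - X (q ll₂ lb₂)) i = (X (q ll₁ lb₁)) i - (X (q ll₂ lb₂)) i := rfl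
    rw [h4, h5]; ring
  have hg2w : gD2 ll₁ lb₁ - gD2 ll₂ lb₂ = w := by
    ext i
    have h1 : (gD2 ll₁ lb₁ - gD2 ll₂ lb₂) i = gD2 ll₁ lb₁ i - gD2 ll₂ lb₂ i := rfl
    have h3 : w i = (R (p ll₁ lb₁ - p ll₂ lb₂)) i + (X (q ll₁ lb₁ - q ll₂ lb₂)) i := rfl
    rw [h1, h3, hg2, hg2, hv, hv, map_sub, map_sub]
    have h4 : (R (p ll₁ lb₁) - R (p ll₂ lb₂)) i = (R (p ll₁ lb₁)) i - (R (p ll₂ lb₂)) i := rfl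
    have h5 : (X (q ll₁ lb₁) - X (q ll₂ lb₂)) i = (X (q ll₁ lb₁)) i - (X (q ll₂ lb₂)) i := rfl
    rw [h4, h5]; ring
  have hw : ‖w‖ ≤ amin⁻¹ * (‖R‖ ^ 2 + ‖X‖ ^ 2) * ‖Δ‖ := by
    calc ‖w‖ ≤ ‖R (p ll₁ lb₁ - p ll₂ lb₂)‖ + ‖X (q ll₁ lb₁ - q ll₂ lb₂)‖ := norm_add_le _ _
      _ ≤ ‖R‖ * (amin⁻¹ * (‖R‖ * ‖Δ‖)) + ‖X‖ * (amin⁻¹ * (‖X‖ * ‖Δ‖)) := by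
          gcongr
          · exact (R.le_opNorm _).trans (mul_le_mul_of_nonneg_left hnp (norm_nonneg R))
          · exact (X.le_opNorm _).trans (mul_le_mul_of_nonneg_left hnq (norm_nonneg X))
      _ = amin⁻¹ * (‖R‖ ^ 2 + ‖X‖ ^ 2) * ‖Δ‖ := by ring
  have hΔle : ‖Δ‖ ≤ Real.sqrt 2 * Real.sqrt (‖ll₁ - ll₂‖ ^ 2 + ‖lb₁ - lb₂‖ ^ 2) := by
    have h1 : Δ = (ll₁ - ll₂) - (lb₁ - lb₂) := by rw [hΔdef]; abel
    calc ‖Δ‖ ≤ ‖ll₁ - ll₂‖ + ‖lb₁ - lb₂‖ := by rw [h1]; exact norm_sub_le _ _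
      _ ≤ Real.sqrt 2 * Real.sqrt (‖ll₁ - ll₂‖ ^ 2 + ‖lb₁ - lb₂‖ ^ 2) :=
        add_le_sqrt_two _ _ (norm_nonneg _) (norm_nonneg _)
  have hLHS : Real.sqrt (‖gD1 ll₁ lb₁ - gD1 ll₂ lb₂‖ ^ 2 + ‖gD2 ll₁ lb₁ - gD2 ll₂ lb₂‖ ^ 2)
      = Real.sqrt 2 * ‖w‖ := by
    rw [hg1w, hg2w, norm_neg]
    rw [show ‖w‖ ^ 2 + ‖w‖ ^ 2 = 2 * ‖w‖ ^ 2 by ring, Real.sqrt_mul (by norm_num),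
      Real.sqrt_sq (norm_nonneg w)]
  rw [hLHS]
  calc Real.sqrt 2 * ‖w‖
      ≤ Real.sqrt 2 * (amin⁻¹ * (‖R‖ ^ 2 + ‖X‖ ^ 2) *
          (Real.sqrt 2 * Real.sqrt (‖ll₁ - ll₂‖ ^ 2 + ‖lb₁ - lb₂‖ ^ 2))) := by
        refine mul_le_mul_of_nonneg_left (hw.trans ?_) (Real.sqrt_nonneg 2)
        gcongr
    _ = (2 * (‖R‖ ^ 2 + ‖X‖ ^ 2) / amin) *
          Real.sqrt (‖ll₁ - ll₂‖ ^ 2 + ‖lb₁ - lb₂‖ ^ 2) := by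
        have h2 : Real.sqrt 2 * Real.sqrt 2 = 2 := Real.mul_self_sqrt (by norm_num)
        linear_combination (amin⁻¹ * (‖R‖ ^ 2 + ‖X‖ ^ 2) *
          Real.sqrt (‖ll₁ - ll₂‖ ^ 2 + ‖lb₁ - lb₂‖ ^ 2)) * h2
end

section
/- Let D : ℝᵐ → ℝ be concave with L-Lipschitz gradient, and let 𝛌(t+1) = ⌈𝛌(t) + γ g(t)⌉₊ for an approximate gradient g(t). Then D(𝛌(t+1)) ≥ D(𝛌(t)) + (1/γ − L/2)‖Δ(t)‖² − ‖∇D(𝛌(t)) − g(t)‖·‖Δ(t)‖, where Δ(t) = 𝛌(t+1) − 𝛌(t). -/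
open scoped RealInnerProductSpace

lemma descent_lemma {n : ℕ} (D : EuclideanSpace ℝ (Fin n) → ℝ)
    (gradD : EuclideanSpace ℝ (Fin n) → EuclideanSpace ℝ (Fin n))
    (hgrad : ∀ x, HasGradientAt D (gradD x) x)
    (L : ℝ) (hL : 0 ≤ L)
    (hLip : ∀ x y, ‖gradD x - gradD y‖ ≤ L * ‖x - y‖)
    (x y : EuclideanSpace ℝ (Fin n)) :
    D x + ⟪gradD x, y - x⟫ - L / 2 * ‖y - x‖ ^ 2 ≤ D y := by
  set v := y - x with hv
  set c := ‖v‖ ^ 2 with hc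
  set b := ⟪gradD x, v⟫ with hb
  set φ : ℝ → ℝ := fun t => D (x + t • v) + (L * c / 2) * t ^ 2 - b * t with hφ
  have hderiv : ∀ t : ℝ, HasDerivAt φ
      (⟪gradD (x + t • v), v⟫ + (L * c / 2) * (2 * t) - b) t := by
    intro t
    have h1 : HasDerivAt (fun t : ℝ => x + t • v) v t := by
      simpa using ((hasDerivAt_id t).smul_const v).const_add x
    have h2 : HasDerivAt (fun t : ℝ => D (x + t • v))
        ⟪gradD (x + t • v), v⟫ t := by
      have := ((hgrad (x + t • v)).hasFDerivAt).comp_hasDerivAt t h1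
      simp at this; exact this
    have h3 : HasDerivAt (fun t : ℝ => (L * c / 2) * t ^ 2)
        ((L * c / 2) * (2 * t)) t := by
      simpa using (hasDerivAt_pow 2 t).const_mul (L * c / 2)
    have h4 : HasDerivAt (fun t : ℝ => b * t) b t := by
      simpa using (hasDerivAt_id t).const_mul b
    exact (h2.add h3).sub h4
  have hmono : MonotoneOn φ (Set.Icc (0:ℝ) 1) := by
    apply monotoneOn_of_deriv_nonneg (convex_Icc 0 1)
    · exact fun t _ => (hderiv t).continuousAt.continuousWithinAt
    · exact fun t _ => ((hderiv t).differentiableAt).differentiableWithinAt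
    · intro t ht
      rw [interior_Icc] at ht
      rw [(hderiv t).deriv]
      have hkey : ⟪gradD x - gradD (x + t • v), v⟫ ≤ L * t * c := by
        calc ⟪gradD x - gradD (x + t • v), v⟫ ≤ ‖gradD x - gradD (x + t • v)‖ * ‖v‖ :=
              real_inner_le_norm _ _
        _ ≤ (L * ‖x - (x + t • v)‖) * ‖v‖ := by
              have := hLip x (x + t • v)
              exact mul_le_mul_of_nonneg_right this (norm_nonneg _)
        _ = L * t * c := by
              have : ‖x - (x + t • v)‖ = t * ‖v‖ := by
                rw [show x - (x + t • v) = -(t • v) by abel, norm_neg, norm_smul,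
                  Real.norm_eq_abs, abs_of_pos ht.1]
              rw [this, hc]; ring
      have hexp : ⟪gradD x - gradD (x + t • v), v⟫ = b - ⟪gradD (x + t • v), v⟫ := by
        rw [inner_sub_left, hb]
      nlinarith [hkey, hexp]
  have h01 : φ 0 ≤ φ 1 := hmono (by norm_num) (by norm_num) (by norm_num)
  have h0 : φ 0 = D x := by simp [hφ]
  have h1 : φ 1 = D y + L * c / 2 - b := by
    have hxy : x + v = y := by rw [hv]; abel
    simp [hφ, hxy]
  rw [h0, h1] at h01
  have : b = ⟪gradD x, y - x⟫ := rfl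
  nlinarith [h01]

/-- Ascent estimate for one projected approximate-gradient step on a concave
function with `L`-Lipschitz gradient. -/
theorem stmt_9 (m : ℕ) (D : EuclideanSpace ℝ (Fin m) → ℝ)
    (gradD : EuclideanSpace ℝ (Fin m) → EuclideanSpace ℝ (Fin m))
    (hconc : ConcaveOn ℝ Set.univ D)
    (hgrad : ∀ x, HasGradientAt D (gradD x) x)
    (L : ℝ) (hL : 0 < L)
    (hLip : ∀ x y, ‖gradD x - gradD y‖ ≤ L * ‖x - y‖)
    (γ : ℝ) (hγ : 0 < γ)
    (lam lamnext g : EuclideanSpace ℝ (Fin m))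
    (hlam : ∀ i, 0 ≤ lam i)
    (hnext : ∀ i, lamnext i = max 0 (lam i + γ * g i)) :
    D lam + (1 / γ - L / 2) * ‖lamnext - lam‖ ^ 2
        - ‖gradD lam - g‖ * ‖lamnext - lam‖ ≤ D lamnext := by
  set Δ := lamnext - lam with hΔ
  -- projection inequality: ‖Δ‖² ≤ γ * ⟪g, Δ⟫
  have hproj : ‖Δ‖ ^ 2 ≤ γ * ⟪g, Δ⟫ := by
    have hself : ⟪Δ, Δ⟫ = ‖Δ‖ ^ 2 := real_inner_self_eq_norm_sq Δ
    rw [← hself]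
    have e1 : ⟪Δ, Δ⟫ = ∑ i, Δ i * Δ i := by
      rw [PiLp.inner_apply]
      exact Finset.sum_congr rfl (fun i _ => by simp only [RCLike.inner_apply, conj_trivial, mul_comm])
    have e2 : γ * ⟪g, Δ⟫ = ∑ i, γ * (g i * Δ i) := by
      rw [PiLp.inner_apply, Finset.mul_sum]
      exact Finset.sum_congr rfl (fun i _ => by simp only [RCLike.inner_apply, conj_trivial, mul_comm])
    rw [e1, e2]
    apply Finset.sum_le_sum
    intro i _
    have hΔi : Δ i = max 0 (lam i + γ * g i) - lam i := by
      simp [hΔ, hnext i]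
    rcases le_or_gt 0 (lam i + γ * g i) with h | h
    · rw [max_eq_right h] at hΔi
      have : Δ i = γ * g i := by rw [hΔi]; ring
      rw [this]; exact le_of_eq (by ring)
    · rw [max_eq_left h.le] at hΔi
      have h1 : Δ i = -lam i := by rw [hΔi]; ring
      nlinarith [hlam i, h1, h]
  have hdesc := descent_lemma D gradD hgrad L hL.le hLip lam lamnext
  have hinner : ⟪gradD lam, Δ⟫ = ⟪g, Δ⟫ + ⟪gradD lam - g, Δ⟫ := by
    rw [inner_sub_left]; ring
  have hcs : -(‖gradD lam - g‖ * ‖Δ‖) ≤ ⟪gradD lam - g, Δ⟫ := by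
    have := abs_real_inner_le_norm (gradD lam - g) Δ
    linarith [neg_abs_le ⟪gradD lam - g, Δ⟫]
  have hgd : (1 / γ) * ‖Δ‖ ^ 2 ≤ ⟪g, Δ⟫ := by
    rw [div_mul_eq_mul_div, one_mul, div_le_iff₀ hγ]
    linarith [hproj]
  nlinarith [hdesc, hinner, hcs, hgd]
end

section
/- Suppose D : ℝᵐ → ℝ is continuous, the sequence 𝛌(t) is bounded with 𝛌(t+1) − 𝛌(t) → 0, g(t) → ∇D(𝛌*) whenever 𝛌(tᵢ) → 𝛌* along a subsequence, and 𝛌(t+1) = ⌈𝛌(t) + γ g(t)⌉₊ with γ > 0. Then every limit point 𝛌* of 𝛌(t) is a fixed point of the projected gradient map: ⌈𝛌* + γ∇D(𝛌*)⌉₊ = 𝛌*. -/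
open Filter Topology

lemma coord_tendsto {m : ℕ} {x : ℕ → EuclideanSpace ℝ (Fin m)}
    {x0 : EuclideanSpace ℝ (Fin m)}
    (h : Tendsto x atTop (nhds x0)) (i : Fin m) :
    Tendsto (fun k => x k i) atTop (nhds (x0 i)) := by
  have := ((EuclideanSpace.proj (𝕜 := ℝ) i).continuous.tendsto x0).comp h
  simpa [Function.comp_def] using this

/-- Every limit point of the projected approximate-gradient iteration is a
fixed point of the projected gradient map. -/
theorem stmt_12 (m : ℕ) (D : EuclideanSpace ℝ (Fin m) → ℝ)
    (gradD : EuclideanSpace ℝ (Fin m) → EuclideanSpace ℝ (Fin m))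
    (hD : Continuous D)
    (hgrad : ∀ x, HasGradientAt D (gradD x) x)
    (hgradcont : Continuous gradD)
    (γ : ℝ) (hγ : 0 < γ)
    (lam : ℕ → EuclideanSpace ℝ (Fin m)) (g : ℕ → EuclideanSpace ℝ (Fin m))
    (hnonneg : ∀ t i, 0 ≤ lam t i)
    (hbdd : ∃ M : ℝ, ∀ t, ‖lam t‖ ≤ M)
    (hupd : ∀ t i, lam (t + 1) i = max 0 (lam t i + γ * g t i))
    (hgap : Filter.Tendsto (fun t => ‖gradD (lam t) - g t‖) Filter.atTop (nhds 0))
    (hstep : Filter.Tendsto (fun t => ‖lam (t + 1) - lam t‖) Filter.atTop (nhds 0)) :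
    ∀ lamstar : EuclideanSpace ℝ (Fin m), ∀ φ : ℕ → ℕ, StrictMono φ →
      Filter.Tendsto (fun k => lam (φ k)) Filter.atTop (nhds lamstar) →
      ∀ i, max 0 (lamstar i + γ * gradD lamstar i) = lamstar i := by
  intro lamstar φ hφ hlim i
  have hφtop : Tendsto φ atTop atTop := hφ.tendsto_atTop
  -- gap → 0 as vectors, along subsequence
  have hgapv : Tendsto (fun t => gradD (lam t) - g t) atTop (nhds 0) :=
    tendsto_zero_iff_norm_tendsto_zero.mpr hgap
  have hgapφ : Tendsto (fun k => gradD (lam (φ k)) - g (φ k)) atTop (nhds 0) :=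
    hgapv.comp hφtop
  -- gradD (lam (φ k)) → gradD lamstar
  have hgradφ : Tendsto (fun k => gradD (lam (φ k))) atTop (nhds (gradD lamstar)) :=
    (hgradcont.tendsto lamstar).comp hlim
  -- g (φ k) → gradD lamstar
  have hgφ : Tendsto (fun k => g (φ k)) atTop (nhds (gradD lamstar)) := by
    have := hgradφ.sub hgapφ
    simpa using this
  -- step → 0 along subsequence
  have hstepv : Tendsto (fun t => lam (t + 1) - lam t) atTop (nhds 0) :=
    tendsto_zero_iff_norm_tendsto_zero.mpr hstep
  have hstepφ : Tendsto (fun k => lam (φ k + 1) - lam (φ k)) atTop (nhds 0) :=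
    hstepv.comp hφtop
  -- lam (φ k + 1) → lamstar
  have hnextφ : Tendsto (fun k => lam (φ k + 1)) atTop (nhds lamstar) := by
    have := hstepφ.add hlim
    simpa using this
  -- coordinates
  have h1 : Tendsto (fun k => lam (φ k + 1) i) atTop (nhds (lamstar i)) :=
    coord_tendsto hnextφ i
  have h2 : Tendsto (fun k => max 0 (lam (φ k) i + γ * g (φ k) i)) atTop
      (nhds (max 0 (lamstar i + γ * gradD lamstar i))) := by
    exact tendsto_const_nhds.max ((coord_tendsto hlim i).add
      ((coord_tendsto hgφ i).const_mul γ))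
  have heq : (fun k => lam (φ k + 1) i) = fun k => max 0 (lam (φ k) i + γ * g (φ k) i) := by
    funext k; exact hupd (φ k) i
  rw [heq] at h1
  exact tendsto_nhds_unique h2 h1
end
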